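/- Let σ > 0 be real and z ∈ ℂ with Im z > 0. Then there exists exactly one m ∈ ℂ with Im m < 0 satisfying m·(z + σ·m) = −1 (the scalar self-consistent Dyson equation of the semicircle law, 1/m = −z − σ·m). -/

import Mathlib

open Complex

lemma stmt11_aux (σ : ℝ) (hσ : 0 < σ) (z : ℂ)
    (m m' : ℂ) (hm : m.im < 0 ∧ m * (z + (σ : ℂ) * m) = -1)
    (hm' : m'.im < 0 ∧ m' * (z + (σ : ℂ) * m') = -1) : m = m' := by
  obtain ⟨him, heq⟩ := hm
  obtain ⟨him', heq'⟩ := hm'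
  by_contra hne
  have hfac : (m - m') * ((σ : ℂ) * (m + m') + z) = 0 := by
    linear_combination heq - heq'
  have hz0 : (σ : ℂ) * (m + m') + z = 0 := by
    rcases mul_eq_zero.mp hfac with h | h
    · exact absurd (sub_eq_zero.mp h) hne
    · exact h
  have hprod : ((σ : ℂ) * m) * m' = 1 := by
    linear_combination m * hz0 - heq
  have hsm : (σ : ℂ) * m ≠ 0 := by
    intro h; rw [h, zero_mul] at hprod; exact one_ne_zero hprod.symm
  have hm0 : m ≠ 0 := by
    intro h; apply hsm; rw [h, mul_zero]
  have hm' : m' = (σ : ℂ)⁻¹ * m⁻¹ := by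
    have hσ0 : (σ : ℂ) ≠ 0 := by exact_mod_cast hσ.ne'
    field_simp
    linear_combination hprod
  have : 0 < m'.im := by
    rw [hm']
    rw [← Complex.ofReal_inv]
    simp only [Complex.mul_im, Complex.ofReal_im, Complex.ofReal_re, zero_mul, add_zero,
      Complex.inv_im]
    have h1 : 0 < Complex.normSq m := Complex.normSq_pos.mpr hm0
    have h2 : 0 < -m.im := by linarith
    positivity
  linarith

/-- For real `σ > 0` and `z ∈ ℂ` with `Im z > 0`, there exists exactly
one `m ∈ ℂ` with `Im m < 0` satisfying the scalar Dyson equation `m·(z + σ·m) = −1`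
(i.e. `1/m = −z − σ·m`). -/
theorem stmt11 (σ : ℝ) (hσ : 0 < σ) (z : ℂ) (hz : 0 < z.im) :
    ∃! m : ℂ, m.im < 0 ∧ m * (z + (σ : ℂ) * m) = -1 := by
  have hσ' : (σ : ℂ) ≠ 0 := by exact_mod_cast hσ.ne'
  obtain ⟨w, hw⟩ : ∃ w : ℂ, w ^ 2 = z ^ 2 - 4 * σ :=
    IsAlgClosed.exists_pow_nat_eq (z ^ 2 - 4 * σ) two_pos
  set r₁ : ℂ := (-z + w) / (2 * σ) with hr₁
  set r₂ : ℂ := (-z - w) / (2 * σ) with hr₂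
  have he₁ : r₁ * (z + (σ : ℂ) * r₁) = -1 := by
    rw [hr₁]; field_simp; linear_combination hw
  have he₂ : r₂ * (z + (σ : ℂ) * r₂) = -1 := by
    rw [hr₂]; field_simp; linear_combination hw
  have hsum : r₁.im + r₂.im = -z.im / σ := by
    rw [hr₁, hr₂]
    have : (2 * (σ : ℂ)) = ((2 * σ : ℝ) : ℂ) := by push_cast; ring
    rw [this, Complex.div_ofReal_im, Complex.div_ofReal_im]
    simp [Complex.add_im, Complex.sub_im, Complex.neg_im]
    field_simp
    ring
  have hneg : -z.im / σ < 0 := div_neg_of_neg_of_pos (by linarith) hσ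
  by_cases h1 : r₁.im < 0
  · exact ⟨r₁, ⟨h1, he₁⟩, fun y hy => stmt11_aux σ hσ z y r₁ hy ⟨h1, he₁⟩⟩
  · have h2 : r₂.im < 0 := by push_neg at h1; linarith [hsum]
    exact ⟨r₂, ⟨h2, he₂⟩, fun y hy => stmt11_aux σ hσ z y r₂ hy ⟨h2, he₂⟩⟩
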